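/- Pattern A (three-term contiguous relation of ₃φ₂-series): Let a,b,c,d,e ∈ ℂ with a,c,e ≠ 0, |bd/(qace)| < 1, and all denominators appearing below nonzero. Set 𝒜_q = ((1−b)(1−d/(qa)) − (1−c)(1−e)·bd/(qace)) / ((1−b)(1−d/(qa))), 𝔸_q = (1−bd/(qace))(1−qa)(1−c)(1−e)·bd / ((1−b)(1−qb)(1−d)(1−d/(qa))·qace), and 𝔄_q = (1−bd/(qace)) / ((1−b)(1−d/(qa))). Then ₃φ₂(a,c,e; b,d; q, bd/(ace)) = 𝒜_q·₃φ₂(qa,c,e; qb,d; q, bd/(ace)) + 𝔸_q·₃φ₂(q²a,qc,qe; q²b,qd; q, bd/(qace)), and also ₃φ₂(a,c,e; b,d; q, bd/(ace)) = 𝒜_q·₃φ₂(qa,c,e; qb,d; q, bd/(ace)) + 𝔄_q·₃φ₂*(qa,c,e; qb,d; q, bd/(qace)). -/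

import Mathlib

noncomputable def qPoch (q x : ℂ) (k : ℕ) : ℂ :=
  ∏ i ∈ Finset.range k, (1 - x * q ^ i)

/-- The basic hypergeometric series ₃φ₂(a,c,e; b,d; q, z). -/
noncomputable def phi32 (q z a c e b d : ℂ) : ℂ :=
  ∑' k : ℕ, (qPoch q a k * qPoch q c k * qPoch q e k) /
      (qPoch q b k * qPoch q d k * qPoch q q k) * z ^ k

/-- The shifted basic hypergeometric series ₃φ₂*(a,c,e; b,d; q, z). -/
noncomputable def phi32s (q z a c e b d : ℂ) : ℂ :=
  ∑' k : ℕ, (qPoch q a k * qPoch q c k * qPoch q e k) /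
      (qPoch q b k * qPoch q d k * qPoch q q k) * ((1 - q ^ k) * z ^ k)

open Filter Topology

lemma qPoch_succ (q x : ℂ) (k : ℕ) : qPoch q x (k+1) = qPoch q x k * (1 - x * q ^ k) :=
  Finset.prod_range_succ _ _

lemma qPoch_succ' (q x : ℂ) (k : ℕ) : qPoch q x (k+1) = (1 - x) * qPoch q (q*x) k := by
  unfold qPoch
  rw [Finset.prod_range_succ']
  simp only [pow_zero, mul_one]
  rw [mul_comm]
  congr 1
  exact Finset.prod_congr rfl fun i _ => by rw [pow_succ]; ring

lemma qPoch_q_ne (q : ℂ) (hq1 : ‖q‖ < 1) (k : ℕ) : qPoch q q k ≠ 0 := by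
  unfold qPoch
  rw [Finset.prod_ne_zero_iff]
  intro i _ h
  have h1 : q ^ (i+1) = 1 := by rw [pow_succ']; linear_combination -h
  have h2 : ‖q‖ ^ (i+1) = 1 := by rw [← norm_pow, h1, norm_one]
  have h3 : ‖q‖ ^ (i+1) < 1 :=
    pow_lt_one₀ (norm_nonneg q) hq1 (Nat.succ_ne_zero i)
  linarith

noncomputable def trm (q A C E B D Z : ℂ) (k : ℕ) : ℂ :=
  qPoch q A k * qPoch q C k * qPoch q E k / (qPoch q B k * qPoch q D k * qPoch q q k) * Z ^ k

lemma trm_succ (q A C E B D Z : ℂ) (hq1 : ‖q‖ < 1)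
    (hB : ∀ k, qPoch q B k ≠ 0) (hD : ∀ k, qPoch q D k ≠ 0) (k : ℕ) :
    trm q A C E B D Z (k+1) = trm q A C E B D Z k *
      ((1 - A*q^k) * (1 - C*q^k) * (1 - E*q^k) * Z /
        ((1 - B*q^k) * (1 - D*q^k) * (1 - q*q^k))) := by
  have hb := hB k
  have hd := hD k
  have hq := qPoch_q_ne q hq1 k
  have hb' : (1 - B*q^k) ≠ 0 := by
    have := hB (k+1); rw [qPoch_succ] at this; exact right_ne_zero_of_mul this
  have hd' : (1 - D*q^k) ≠ 0 := by
    have := hD (k+1); rw [qPoch_succ] at this; exact right_ne_zero_of_mul this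
  have hq' : (1 - q*q^k) ≠ 0 := by
    have := qPoch_q_ne q hq1 (k+1); rw [qPoch_succ] at this; exact right_ne_zero_of_mul this
  unfold trm
  rw [qPoch_succ, qPoch_succ, qPoch_succ, qPoch_succ, qPoch_succ, qPoch_succ, pow_succ]
  field_simp

lemma trm_summable (q A C E B D Z : ℂ) (hq1 : ‖q‖ < 1)
    (hB : ∀ k, qPoch q B k ≠ 0) (hD : ∀ k, qPoch q D k ≠ 0)
    (hZ : ‖Z‖ < 1) : Summable (trm q A C E B D Z) := by
  set r : ℝ := (‖Z‖ + 1)/2 with hr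
  have hr1 : r < 1 := by rw [hr]; linarith
  have hZr : ‖Z‖ < r := by rw [hr]; linarith
  apply summable_of_ratio_norm_eventually_le hr1
  have hqpow : Tendsto (fun n : ℕ => (q:ℂ)^n) atTop (𝓝 0) :=
    tendsto_pow_atTop_nhds_zero_of_norm_lt_one hq1
  have hnum : Tendsto (fun n : ℕ =>
      (1 - A*q^n) * (1 - C*q^n) * (1 - E*q^n) * Z) atTop (𝓝 ((1-A*0)*(1-C*0)*(1-E*0)*Z)) := by
    apply Tendsto.mul _ tendsto_const_nhds
    exact ((tendsto_const_nhds.sub (hqpow.const_mul A)).mul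
      (tendsto_const_nhds.sub (hqpow.const_mul C))).mul
      (tendsto_const_nhds.sub (hqpow.const_mul E))
  have hden : Tendsto (fun n : ℕ =>
      (1 - B*q^n) * (1 - D*q^n) * (1 - q*q^n)) atTop (𝓝 ((1-B*0)*(1-D*0)*(1-q*0))) := by
    exact ((tendsto_const_nhds.sub (hqpow.const_mul B)).mul
      (tendsto_const_nhds.sub (hqpow.const_mul D))).mul
      (tendsto_const_nhds.sub (hqpow.const_mul q))
  have hratio : Tendsto (fun n : ℕ =>
      (1 - A*q^n) * (1 - C*q^n) * (1 - E*q^n) * Z /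
        ((1 - B*q^n) * (1 - D*q^n) * (1 - q*q^n))) atTop (𝓝 Z) := by
    have := hnum.div hden (by norm_num)
    simp only [mul_zero, sub_zero, one_mul, div_one] at this
    exact this
  have hnorm : Tendsto (fun n : ℕ => ‖(1 - A*q^n) * (1 - C*q^n) * (1 - E*q^n) * Z /
        ((1 - B*q^n) * (1 - D*q^n) * (1 - q*q^n))‖) atTop (𝓝 ‖Z‖) := by
    exact hratio.norm
  filter_upwards [hnorm.eventually_lt_const hZr] with n hn
  rw [trm_succ q A C E B D Z hq1 hB hD n, norm_mul, mul_comm]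
  exact mul_le_mul_of_nonneg_right (le_of_lt hn) (norm_nonneg _)

set_option maxHeartbeats 2000000 in
lemma keyStep (q a b c e d h W X P Pa Pc Pe Pb Pd Pq : ℂ)
    (hdh : d = q*a*h) (hW : W = b*h/(c*e)) (hc : c ≠ 0) (he : e ≠ 0)
    (h1 : 1 - b ≠ 0) (h2 : 1 - h ≠ 0)
    (hPb : Pb ≠ 0) (hPd : Pd ≠ 0) (hPq : Pq ≠ 0)
    (hb' : 1 - q*b*X ≠ 0) (hd' : 1 - d*X ≠ 0) (hq' : 1 - q*X ≠ 0) :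
    ((1-a)*Pa * (Pc*(1-c*X)) * (Pe*(1-e*X))) / ((1-b)*Pb * (Pd*(1-d*X)) * (Pq*(1-q*X)))
        * (X*P*(q*W))
      - ((1-b)*(1-h) - (1-c)*(1-e)*W)/((1-b)*(1-h))
        * ((Pa*(1-q*a*X) * (Pc*(1-c*X)) * (Pe*(1-e*X)))
            / (Pb*(1-q*b*X) * (Pd*(1-d*X)) * (Pq*(1-q*X))) * (X*P*(q*W)))
      - (1 - W)/((1-b)*(1-h))
        * ((Pa*(1-q*a*X) * (Pc*(1-c*X)) * (Pe*(1-e*X)))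
            / (Pb*(1-q*b*X) * (Pd*(1-d*X)) * (Pq*(1-q*X))) * (P*W)
           - (Pa*(1-q*a*X) * (Pc*(1-c*X)) * (Pe*(1-e*X)))
            / (Pb*(1-q*b*X) * (Pd*(1-d*X)) * (Pq*(1-q*X))) * (X*P*(q*W)))
    = -(W*(1-c*X)*(1-e*X)) * (Pa * Pc * Pe / (Pb * Pd * Pq) * P) / ((1-b)*(1-h))
      - (-(W*(1-c*(q*X))*(1-e*(q*X)))
          * ((Pa*(1-q*a*X) * (Pc*(1-c*X)) * (Pe*(1-e*X)))
              / (Pb*(1-q*b*X) * (Pd*(1-d*X)) * (Pq*(1-q*X))) * (P*W))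
          / ((1-b)*(1-h))) := by
  subst hdh; subst hW
  have hce : c*e ≠ 0 := mul_ne_zero hc he
  have h12 : (1-b)*(1-h) ≠ 0 := mul_ne_zero h1 h2
  set D : ℂ := (1-b)*(1-h)*(1-q*b*X)*(1-q*a*h*X)*(1-q*X)*(c*e)^2*(Pb*Pd*Pq) with hD
  have hDne : D ≠ 0 := by
    rw [hD]
    exact mul_ne_zero (mul_ne_zero (mul_ne_zero (mul_ne_zero (mul_ne_zero (mul_ne_zero h1 h2)
      hb') hd') hq') (pow_ne_zero _ hce)) (mul_ne_zero (mul_ne_zero hPb hPd) hPq)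
  have hden1 : (1-b)*Pb * (Pd*(1-q*a*h*X)) * (Pq*(1-q*X)) * (c*e) ≠ 0 :=
    mul_ne_zero (mul_ne_zero (mul_ne_zero (mul_ne_zero h1 hPb) (mul_ne_zero hPd hd'))
      (mul_ne_zero hPq hq')) hce
  have hDF : Pb*(1-q*b*X) * (Pd*(1-q*a*h*X)) * (Pq*(1-q*X)) ≠ 0 :=
    mul_ne_zero (mul_ne_zero (mul_ne_zero hPb hb') (mul_ne_zero hPd hd')) (mul_ne_zero hPq hq')
  have hPbdq : Pb * Pd * Pq ≠ 0 := mul_ne_zero (mul_ne_zero hPb hPd) hPq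
  have c1 : ((1-a)*Pa * (Pc*(1-c*X)) * (Pe*(1-e*X))) / ((1-b)*Pb * (Pd*(1-q*a*h*X)) * (Pq*(1-q*X)))
        * (X*P*(q*(b*h/(c*e))))
      = ((1-a)*(1-c*X)*(1-e*X)*q*b*h*X*(1-h)*(1-q*b*X)*(c*e)*(Pa*Pc*Pe*P))/D := by
    rw [show (X*P*(q*(b*h/(c*e)))) = (X*P*(q*b*h))/(c*e) by ring, div_mul_div_comm,
      div_eq_div_iff hden1 hDne, hD]
    ring
  have hAA : ((1-b)*(1-h) - (1-c)*(1-e)*(b*h/(c*e)))/((1-b)*(1-h))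
      = ((1-b)*(1-h)*(c*e) - (1-c)*(1-e)*(b*h))/((c*e)*((1-b)*(1-h))) := by
    rw [show (1-b)*(1-h) - (1-c)*(1-e)*(b*h/(c*e))
        = ((1-b)*(1-h)*(c*e) - (1-c)*(1-e)*(b*h))/(c*e) by
      rw [sub_div, mul_div_cancel_right₀ _ hce]; ring, div_div]
  have c2 : ((1-b)*(1-h) - (1-c)*(1-e)*(b*h/(c*e)))/((1-b)*(1-h))
        * ((Pa*(1-q*a*X) * (Pc*(1-c*X)) * (Pe*(1-e*X)))
            / (Pb*(1-q*b*X) * (Pd*(1-q*a*h*X)) * (Pq*(1-q*X))) * (X*P*(q*(b*h/(c*e)))))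
      = (((1-b)*(1-h)*(c*e) - (1-c)*(1-e)*(b*h))
          * ((1-q*a*X)*(1-c*X)*(1-e*X)*q*b*h*X)*(Pa*Pc*Pe*P))/D := by
    rw [hAA, show (X*P*(q*(b*h/(c*e)))) = (X*P*(q*b*h))/(c*e) by ring, div_mul_div_comm,
      div_mul_div_comm,
      div_eq_div_iff (mul_ne_zero (mul_ne_zero hce h12) (mul_ne_zero hDF hce)) hDne, hD]
    ring
  have hBB : (1 - b*h/(c*e))/((1-b)*(1-h)) = (c*e - b*h)/((c*e)*((1-b)*(1-h))) := by
    rw [show (1:ℂ) - b*h/(c*e) = (c*e - b*h)/(c*e) by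
      rw [sub_div, div_self hce], div_div]
  have c3 : (1 - b*h/(c*e))/((1-b)*(1-h))
        * ((Pa*(1-q*a*X) * (Pc*(1-c*X)) * (Pe*(1-e*X)))
            / (Pb*(1-q*b*X) * (Pd*(1-q*a*h*X)) * (Pq*(1-q*X))) * (P*(b*h/(c*e)))
           - (Pa*(1-q*a*X) * (Pc*(1-c*X)) * (Pe*(1-e*X)))
            / (Pb*(1-q*b*X) * (Pd*(1-q*a*h*X)) * (Pq*(1-q*X))) * (X*P*(q*(b*h/(c*e)))))
      = ((c*e - b*h) * ((Pa*(1-q*a*X) * (Pc*(1-c*X)) * (Pe*(1-e*X)))*(P*(b*h))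
          - (Pa*(1-q*a*X) * (Pc*(1-c*X)) * (Pe*(1-e*X)))*(X*P*(q*b*h))))/D := by
    rw [hBB, show (X*P*(q*(b*h/(c*e)))) = (X*P*(q*b*h))/(c*e) by ring,
      show (P*(b*h/(c*e))) = (P*(b*h))/(c*e) by ring, div_mul_div_comm, div_mul_div_comm,
      div_sub_div_same, div_mul_div_comm,
      div_eq_div_iff (mul_ne_zero (mul_ne_zero hce h12) (mul_ne_zero hDF hce)) hDne, hD]
    ring
  have c4 : -((b*h/(c*e))*(1-c*X)*(1-e*X)) * (Pa * Pc * Pe / (Pb * Pd * Pq) * P) / ((1-b)*(1-h))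
      = (-(b*h*(1-c*X)*(1-e*X)*((1-q*b*X)*(1-q*a*h*X)*(1-q*X))*(c*e)*(Pa*Pc*Pe*P)))/D := by
    rw [show -((b*h/(c*e))*(1-c*X)*(1-e*X)) = (-(b*h*(1-c*X)*(1-e*X)))/(c*e) by ring,
      show Pa * Pc * Pe / (Pb * Pd * Pq) * P = (Pa*Pc*Pe*P)/(Pb*Pd*Pq) by ring,
      div_mul_div_comm, div_div,
      div_eq_div_iff (mul_ne_zero (mul_ne_zero hce hPbdq) h12) hDne, hD]
    ring
  have c5 : -((b*h/(c*e))*(1-c*(q*X))*(1-e*(q*X)))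
          * ((Pa*(1-q*a*X) * (Pc*(1-c*X)) * (Pe*(1-e*X)))
              / (Pb*(1-q*b*X) * (Pd*(1-q*a*h*X)) * (Pq*(1-q*X))) * (P*(b*h/(c*e))))
          / ((1-b)*(1-h))
      = (-(b*h*(1-c*(q*X))*(1-e*(q*X)))
          * ((Pa*(1-q*a*X) * (Pc*(1-c*X)) * (Pe*(1-e*X)))*(P*(b*h))))/D := by
    rw [show -((b*h/(c*e))*(1-c*(q*X))*(1-e*(q*X)))
        = (-(b*h*(1-c*(q*X))*(1-e*(q*X))))/(c*e) by ring,
      show (P*(b*h/(c*e))) = (P*(b*h))/(c*e) by ring, div_mul_div_comm, div_mul_div_comm,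
      div_div,
      div_eq_div_iff (mul_ne_zero (mul_ne_zero hce (mul_ne_zero hDF hce)) h12) hDne, hD]
    ring
  rw [c1, c2, c3, c4, c5, div_sub_div_same, div_sub_div_same]
  congr 1
  ring

lemma shiftStep (q A2 C2 E2 B2 D2 W X P Pa Pc Pe Pb Pd Pq : ℂ)
    (h3 : 1 - B2 ≠ 0) (h4 : 1 - D2 ≠ 0) (hPb : Pb ≠ 0) (hPd : Pd ≠ 0) (hPq : Pq ≠ 0)
    (hq' : 1 - q*X ≠ 0) :
    ((1-A2)*Pa * ((1-C2)*Pc) * ((1-E2)*Pe)) / ((1-B2)*Pb * ((1-D2)*Pd) * (Pq*(1-q*X)))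
        * (P*W)
      - ((1-A2)*Pa * ((1-C2)*Pc) * ((1-E2)*Pe)) / ((1-B2)*Pb * ((1-D2)*Pd) * (Pq*(1-q*X)))
        * (X*P*(q*W))
    = (1-A2)*(1-C2)*(1-E2)*W/((1-B2)*(1-D2)) * (Pa * Pc * Pe / (Pb * Pd * Pq) * P) := by
  have hDL : (1-B2)*Pb * ((1-D2)*Pd) * (Pq*(1-q*X)) ≠ 0 :=
    mul_ne_zero (mul_ne_zero (mul_ne_zero h3 hPb) (mul_ne_zero h4 hPd)) (mul_ne_zero hPq hq')
  have hDR : (1-B2)*(1-D2) * (Pb*Pd*Pq) ≠ 0 :=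
    mul_ne_zero (mul_ne_zero h3 h4) (mul_ne_zero (mul_ne_zero hPb hPd) hPq)
  rw [div_mul_eq_mul_div, div_mul_eq_mul_div, div_sub_div_same,
    show Pa * Pc * Pe / (Pb * Pd * Pq) * P = (Pa*Pc*Pe*P)/(Pb*Pd*Pq) from
      div_mul_eq_mul_div _ _ _,
    div_mul_div_comm, div_eq_div_iff hDL hDR]
  ring

set_option maxHeartbeats 4000000 in
theorem patternA (q a b c d e : ℂ)
    (hq0 : 0 < ‖q‖) (hq1 : ‖q‖ < 1)
    (ha : a ≠ 0) (hc : c ≠ 0) (he : e ≠ 0)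
    (hconv : ‖b * d / (q * a * c * e)‖ < 1)
    (h1 : 1 - b ≠ 0) (h2 : 1 - d / (q * a) ≠ 0)
    (h3 : 1 - q * b ≠ 0) (h4 : 1 - d ≠ 0)
    (hp0 : ∀ k, qPoch q (b) k ≠ 0) (hp1 : ∀ k, qPoch q (d) k ≠ 0) (hp2 : ∀ k, qPoch q (q * b) k ≠ 0) (hp3 : ∀ k, qPoch q (q ^ 2 * b) k ≠ 0) (hp4 : ∀ k, qPoch q (q * d) k ≠ 0) :
    (phi32 q (b * d / (a * c * e)) a c e b d =
      ((1 - b) * (1 - d / (q * a)) - (1 - c) * (1 - e) * (b * d / (q * a * c * e))) / ((1 - b) * (1 - d / (q * a))) *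
        phi32 q (b * d / (a * c * e)) (q * a) c e (q * b) d +
      (1 - b * d / (q * a * c * e)) * (1 - q * a) * (1 - c) * (1 - e) * (b * d) / ((1 - b) * (1 - q * b) * (1 - d) * (1 - d / (q * a)) * (q * a * c * e)) *
        phi32 q (b * d / (q * a * c * e)) (q ^ 2 * a) (q * c) (q * e) (q ^ 2 * b) (q * d)) ∧
    (phi32 q (b * d / (a * c * e)) a c e b d =
      ((1 - b) * (1 - d / (q * a)) - (1 - c) * (1 - e) * (b * d / (q * a * c * e))) / ((1 - b) * (1 - d / (q * a))) *
        phi32 q (b * d / (a * c * e)) (q * a) c e (q * b) d +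
      (1 - b * d / (q * a * c * e)) / ((1 - b) * (1 - d / (q * a))) *
        phi32s q (b * d / (q * a * c * e)) (q * a) c e (q * b) d) := by
  have hq : q ≠ 0 := by
    intro h; rw [h] at hq0; simp at hq0
  set W : ℂ := b * d / (q * a * c * e) with hWdef
  have hzw : b * d / (a * c * e) = q * W := by
    rw [hWdef]; field_simp
  have habsW : ‖W‖ < 1 := hconv
  have habsqW : ‖q * W‖ < 1 := by
    rw [norm_mul]
    nlinarith [norm_nonneg q, norm_nonneg W]
  set T : ℕ → ℂ := trm q a c e b d (q*W) with hT
  set U : ℕ → ℂ := trm q (q*a) c e (q*b) d (q*W) with hU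
  set H : ℕ → ℂ := trm q (q*a) c e (q*b) d W with hH
  set S : ℕ → ℂ := trm q (q^2*a) (q*c) (q*e) (q^2*b) (q*d) W with hS
  set AA : ℂ := ((1 - b) * (1 - d / (q * a)) - (1 - c) * (1 - e) * W) /
    ((1 - b) * (1 - d / (q * a))) with hAA
  set BB : ℂ := (1 - W) / ((1 - b) * (1 - d / (q * a))) with hBB
  have h12 : (1 - b) * (1 - d / (q * a)) ≠ 0 := mul_ne_zero h1 h2
  set Gf : ℕ → ℂ := fun j => Nat.casesOn j 0
    (fun k => -(W*(1-c*q^k)*(1-e*q^k)) * H k / ((1 - b) * (1 - d / (q * a)))) with hGf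
  have sT : Summable T := trm_summable q a c e b d (q*W) hq1 hp0 hp1 habsqW
  have sU : Summable U := trm_summable q (q*a) c e (q*b) d (q*W) hq1 hp2 hp1 habsqW
  have sH : Summable H := trm_summable q (q*a) c e (q*b) d W hq1 hp2 hp1 habsW
  have sS : Summable S := trm_summable q (q^2*a) (q*c) (q*e) (q^2*b) (q*d) W hq1 hp3 hp4 habsW
  have hdh : d = q*a*(d/(q*a)) := by field_simp
  have hWh : W = b*(d/(q*a))/(c*e) := by
    rw [hWdef, ← mul_div_assoc, div_div]; ring
  -- the key termwise telescoping identity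
  have key : ∀ j, T j - AA * U j - BB * (H j - U j) = Gf j - Gf (j+1) := by
    intro j
    cases j with
    | zero =>
      show trm q a c e b d (q*W) 0 - AA * trm q (q*a) c e (q*b) d (q*W) 0
          - BB * (trm q (q*a) c e (q*b) d W 0 - trm q (q*a) c e (q*b) d (q*W) 0)
        = 0 - (-(W*(1-c*q^0)*(1-e*q^0)) * trm q (q*a) c e (q*b) d W 0
            / ((1 - b) * (1 - d / (q * a))))
      simp only [trm, qPoch, Finset.range_zero, Finset.prod_empty, pow_zero, mul_one, one_mul,
        div_one, sub_self, mul_zero]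
      rw [hAA, sub_div, div_self h12]
      ring
    | succ k =>
      have hb' : 1 - q*b*q^k ≠ 0 := by
        have := hp2 (k+1); rw [qPoch_succ] at this; exact right_ne_zero_of_mul this
      have hd' : 1 - d*q^k ≠ 0 := by
        have := hp1 (k+1); rw [qPoch_succ] at this; exact right_ne_zero_of_mul this
      have hq' : 1 - q*q^k ≠ 0 := by
        have := qPoch_q_ne q hq1 (k+1); rw [qPoch_succ] at this
        exact right_ne_zero_of_mul this
      show trm q a c e b d (q*W) (k+1) - AA * trm q (q*a) c e (q*b) d (q*W) (k+1)
          - BB * (trm q (q*a) c e (q*b) d W (k+1) - trm q (q*a) c e (q*b) d (q*W) (k+1))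
        = (-(W*(1-c*q^k)*(1-e*q^k)) * trm q (q*a) c e (q*b) d W k
            / ((1 - b) * (1 - d / (q * a))))
          - (-(W*(1-c*q^(k+1))*(1-e*q^(k+1))) * trm q (q*a) c e (q*b) d W (k+1)
            / ((1 - b) * (1 - d / (q * a))))
      rw [hAA, hBB]
      simp only [trm, qPoch_succ' q a, qPoch_succ' q b, qPoch_succ q c, qPoch_succ q e,
        qPoch_succ q d, qPoch_succ q q, qPoch_succ q (q*a), qPoch_succ q (q*b),
        pow_succ, mul_pow]
      linear_combination keyStep q a b c e d (d/(q*a)) W (q^k) (W^k)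
        (qPoch q (q*a) k) (qPoch q c k) (qPoch q e k)
        (qPoch q (q*b) k) (qPoch q d k) (qPoch q q k)
        hdh hWh hc he h1 h2 (hp2 k) (hp1 k) (qPoch_q_ne q hq1 k) hb' hd' hq'
  -- limit of Gf
  have hqpow : Tendsto (fun n : ℕ => (q:ℂ)^n) atTop (𝓝 0) :=
    tendsto_pow_atTop_nhds_zero_of_norm_lt_one hq1
  have limG : Tendsto Gf atTop (𝓝 0) := by
    rw [← tendsto_add_atTop_iff_nat 1]
    have heq : ∀ k : ℕ, Gf (k+1)
        = (-(W*(1-c*q^k)*(1-e*q^k)) / ((1 - b) * (1 - d / (q * a)))) * H k := by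
      intro k
      show -(W*(1-c*q^k)*(1-e*q^k)) * H k / ((1 - b) * (1 - d / (q * a))) = _
      ring
    have hcoef : Tendsto (fun k : ℕ =>
        -(W*(1-c*q^k)*(1-e*q^k)) / ((1 - b) * (1 - d / (q * a)))) atTop
        (𝓝 (-(W*(1-c*0)*(1-e*0)) / ((1 - b) * (1 - d / (q * a))))) := by
      apply Tendsto.div_const
      exact (((tendsto_const_nhds (x := W)).mul
        (tendsto_const_nhds.sub (hqpow.const_mul c))).mul
        (tendsto_const_nhds.sub (hqpow.const_mul e))).neg
    have := hcoef.mul sH.tendsto_atTop_zero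
    rw [mul_zero] at this
    simpa only [heq] using this
  -- sum of the telescoping series
  have sD : Summable (fun j => T j - AA * U j - BB * (H j - U j)) :=
    (sT.sub (sU.mul_left AA)).sub ((sH.sub sU).mul_left BB)
  have hpartial : Tendsto (fun n => ∑ i ∈ Finset.range n,
      (T i - AA * U i - BB * (H i - U i))) atTop (𝓝 0) := by
    have heq : (fun n => ∑ i ∈ Finset.range n, (T i - AA * U i - BB * (H i - U i)))
        = fun n => Gf 0 - Gf n := by
      funext n
      rw [Finset.sum_congr rfl fun i _ => key i, Finset.sum_range_sub' Gf n]
    rw [heq]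
    have : Gf 0 = 0 := rfl
    rw [this]
    simpa using limG.neg
  have tsumD : ∑' j, (T j - AA * U j - BB * (H j - U j)) = 0 :=
    tendsto_nhds_unique sD.hasSum.tendsto_sum_nat hpartial
  rw [Summable.tsum_sub (sT.sub (sU.mul_left AA)) ((sH.sub sU).mul_left BB),
    Summable.tsum_sub sT (sU.mul_left AA), tsum_mul_left, tsum_mul_left] at tsumD
  have core : ∑' j, T j = AA * ∑' j, U j + BB * ∑' j, (H j - U j) := by
    linear_combination tsumD
  -- identification of the series with phi32/phi32s
  have hphiT : phi32 q (b * d / (a * c * e)) a c e b d = ∑' j, T j := by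
    rw [hzw]; rfl
  have hphiU : phi32 q (b * d / (a * c * e)) (q*a) c e (q*b) d = ∑' j, U j := by
    rw [hzw]; rfl
  have hphiV : phi32s q W (q*a) c e (q*b) d = ∑' j, (H j - U j) := by
    apply tsum_congr
    intro k
    show _ = trm q (q*a) c e (q*b) d W k - trm q (q*a) c e (q*b) d (q*W) k
    simp only [trm]
    rw [mul_pow]
    ring
  have hphiS : phi32 q W (q^2*a) (q*c) (q*e) (q^2*b) (q*d) = ∑' j, S j := rfl
  -- second identity
  have second : phi32 q (b * d / (a * c * e)) a c e b d =
      AA * phi32 q (b * d / (a * c * e)) (q*a) c e (q*b) d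
      + BB * phi32s q W (q*a) c e (q*b) d := by
    rw [hphiT, hphiU, hphiV]; exact core
  -- shift identity for the first form
  have hshift : ∑' j, (H j - U j) = ((1-q*a)*(1-c)*(1-e)*W/((1-q*b)*(1-d))) * ∑' j, S j := by
    rw [Summable.tsum_eq_zero_add (sH.sub sU)]
    have h00 : H 0 - U 0 = 0 := by
      show trm q (q*a) c e (q*b) d W 0 - trm q (q*a) c e (q*b) d (q*W) 0 = 0
      simp [trm, qPoch]
    rw [h00, zero_add, ← tsum_mul_left]
    apply tsum_congr
    intro k
    have hq' : 1 - q*q^k ≠ 0 := by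
      have := qPoch_q_ne q hq1 (k+1); rw [qPoch_succ] at this
      exact right_ne_zero_of_mul this
    show trm q (q*a) c e (q*b) d W (k+1) - trm q (q*a) c e (q*b) d (q*W) (k+1)
      = (1-q*a)*(1-c)*(1-e)*W/((1-q*b)*(1-d))
        * trm q (q^2*a) (q*c) (q*e) (q^2*b) (q*d) W k
    simp only [trm, qPoch_succ' q (q*a), qPoch_succ' q (q*b), qPoch_succ' q c,
      qPoch_succ' q e, qPoch_succ' q d, qPoch_succ q q, pow_succ W, pow_succ (q*W),
      mul_pow q W, show q*(q*a) = q^2*a from by ring, show q*(q*b) = q^2*b from by ring]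
    linear_combination shiftStep q (q*a) c e (q*b) d W (q^k) (W^k)
      (qPoch q (q^2*a) k) (qPoch q (q*c) k) (qPoch q (q*e) k)
      (qPoch q (q^2*b) k) (qPoch q (q*d) k) (qPoch q q k)
      h3 h4 (hp3 k) (hp4 k) (qPoch_q_ne q hq1 k) hq'
  have hcoef2 : (1 - W) * (1 - q * a) * (1 - c) * (1 - e) * (b * d) /
      ((1 - b) * (1 - q * b) * (1 - d) * (1 - d / (q * a)) * (q * a * c * e))
      = BB * ((1-q*a)*(1-c)*(1-e)*W/((1-q*b)*(1-d))) := by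
    rw [hBB, hWdef]
    field_simp
  have first : phi32 q (b * d / (a * c * e)) a c e b d =
      AA * phi32 q (b * d / (a * c * e)) (q*a) c e (q*b) d
      + (1 - W) * (1 - q * a) * (1 - c) * (1 - e) * (b * d) /
        ((1 - b) * (1 - q * b) * (1 - d) * (1 - d / (q * a)) * (q * a * c * e))
        * phi32 q W (q^2*a) (q*c) (q*e) (q^2*b) (q*d) := by
    rw [hphiT, hphiU, hphiS, hcoef2, core, hshift]
    ring
  exact ⟨first, second⟩
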